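/- Let R be a commutative ring, M a finitely presented R-module, and u : R^m → M an R-linear map. Then the set { p ∈ Spec R : the induced map κ(p)^m → M ⊗_R κ(p) is surjective } is open in Spec R. -/
import Mathlib

/-- The residue field `κ(p)` at a prime `p`. -/
noncomputable abbrev residueField {R : Type u} [CommRing R] (p : PrimeSpectrum R) : Type u :=
  IsLocalRing.ResidueField (Localization.AtPrime p.asIdeal)

set_option maxHeartbeats 1000000 in
open TensorProduct in
/-- Surjectivity of `u ⊗ κ(p)` is equivalent to vanishing of the cokernel at `p`. -/
lemma surjective_baseChange_iff_aux
    {R : Type u} [CommRing R] {M : Type u} [AddCommGroup M] [Module R M]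
    [Module.Finite R M] {m : ℕ} (u : (Fin m → R) →ₗ[R] M) (p : PrimeSpectrum R) :
    Function.Surjective (LinearMap.baseChange (residueField p) u) ↔
      Subsingleton (LocalizedModule p.asIdeal.primeCompl (M ⧸ LinearMap.range u)) := by
  classical
  set κ := residueField p
  set N := M ⧸ LinearMap.range u
  set q : M →ₗ[R] N := (LinearMap.range u).mkQ
  have hq : Function.Surjective q := Submodule.mkQ_surjective _
  have hexact : Function.Exact u q := LinearMap.exact_map_mkQ_range u
  -- exactness after base change
  have hexact' : Function.Exact (LinearMap.baseChange κ u) (LinearMap.baseChange κ q) := by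
    simpa [LinearMap.baseChange_eq_ltensor] using lTensor_exact κ hexact hq
  have hq' : Function.Surjective (LinearMap.baseChange κ q) := by
    simpa [LinearMap.baseChange_eq_ltensor] using LinearMap.lTensor_surjective κ hq
  -- step 1 : surjectivity iff κ ⊗ N is trivial
  have step1 : Function.Surjective (LinearMap.baseChange κ u) ↔ Subsingleton (κ ⊗[R] N) := by
    constructor
    · intro hs
      refine subsingleton_of_forall_eq 0 fun y ↦ ?_
      obtain ⟨x, rfl⟩ := hq' y
      obtain ⟨z, rfl⟩ := hs x
      exact (hexact' _).mpr ⟨z, rfl⟩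
    · intro hsub
      rw [← LinearMap.range_eq_top, ← top_le_iff]
      intro x _
      exact (hexact' x).mp (Subsingleton.elim _ _)
  rw [step1]
  -- step 2 : κ ⊗[R] N ≃ κ ⊗[Rₚ] Nₚ and Nakayama
  set Rₚ := Localization.AtPrime p.asIdeal
  set Nₚ := LocalizedModule p.asIdeal.primeCompl N
  haveI : Module.Finite R N := Module.Finite.quotient R _
  haveI : Module.Finite Rₚ Nₚ :=
    Module.Finite.of_isLocalizedModule p.asIdeal.primeCompl
      (LocalizedModule.mkLinearMap p.asIdeal.primeCompl N)
  have hbc : IsBaseChange Rₚ (LocalizedModule.mkLinearMap p.asIdeal.primeCompl N) :=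
    IsLocalizedModule.isBaseChange p.asIdeal.primeCompl Rₚ _
  let e1 : Rₚ ⊗[R] N ≃ₗ[Rₚ] Nₚ := hbc.equiv
  let e2 : κ ⊗[Rₚ] (Rₚ ⊗[R] N) ≃ₗ[κ] κ ⊗[R] N :=
    AlgebraTensorModule.cancelBaseChange R Rₚ κ κ N
  let e3 : κ ⊗[Rₚ] (Rₚ ⊗[R] N) ≃ₗ[Rₚ] κ ⊗[Rₚ] Nₚ :=
    LinearEquiv.lTensor κ e1
  have h1 : Subsingleton (κ ⊗[R] N) ↔ Subsingleton (κ ⊗[Rₚ] Nₚ) :=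
    ⟨fun h ↦ (e3.toEquiv.symm.trans e2.toEquiv).subsingleton,
     fun h ↦ (e2.toEquiv.symm.trans e3.toEquiv).subsingleton⟩
  rw [h1]
  exact IsLocalRing.subsingleton_tensorProduct (R := Rₚ)

open TensorProduct in
/-- For a finitely presented module `M` over a commutative ring `R` and a linear map
`u : R^m → M`, the locus of primes `p` where the induced map
`κ(p)^m → M ⊗_R κ(p)` is surjective is open in `Spec R`. -/
theorem isOpen_surjective_locus
    (R : Type u) [CommRing R] (M : Type u) [AddCommGroup M] [Module R M]
    [Module.FinitePresentation R M] (m : ℕ) (u : (Fin m → R) →ₗ[R] M) :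
    IsOpen {p : PrimeSpectrum R |
      Function.Surjective (LinearMap.baseChange (residueField p) u)} := by
  haveI : Module.Finite R (M ⧸ LinearMap.range u) := Module.Finite.quotient R _
  have hset : {p : PrimeSpectrum R |
      Function.Surjective (LinearMap.baseChange (residueField p) u)} =
      (Module.support R (M ⧸ LinearMap.range u))ᶜ := by
    ext p
    rw [Set.mem_setOf_eq, Set.mem_compl_iff, Module.notMem_support_iff]
    exact surjective_baseChange_iff_aux u p
  rw [hset, Module.support_eq_zeroLocus]
  exact (PrimeSpectrum.isClosed_zeroLocus _).isOpen_compl
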